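/- Let $K \in \mathbb{C}$ with $\mathrm{Re}\, K \geq 0$, $\vartheta > 2|\mathrm{Re}\, K|$, and $f \in L^2(\mathbb{R}, e^{\vartheta|t|}dt)$. Define $\tilde{u}^+(x) = \frac{1}{2K}\int_x^{\infty}\big(e^{K(x-y)} - e^{-K(x-y)}\big) f(y)\,dy$ for $x > 0$ (assuming $K \neq 0$). Then there exist constants $C > 0$ and $0 < \tilde{\vartheta} < \vartheta$ such that $|\tilde{u}^+(x)| \leq C e^{-\tilde{\vartheta} x} \|f\|_{L^2(\mathbb{R}, e^{\vartheta|t|}dt)}$ for all $x > 0$. -/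

import Mathlib

open Complex MeasureTheory

lemma aux_exp_integral (b x : ℝ) (hb : 0 < b) :
    ∫ y in Set.Ioi x, Real.exp (-b * y) = Real.exp (-b * x) / b := by
  have hD : ∀ y : ℝ, HasDerivAt (fun y => -Real.exp (-b * y) / b) (Real.exp (-b * y)) y := by
    intro y
    have h1 : HasDerivAt (fun y : ℝ => -b * y) (-b) y := by
      simpa using (hasDerivAt_id y).const_mul (-b)
    have h2 := (h1.exp.div_const b).neg
    have h3 : (fun y => -Real.exp (-b * y) / b) = -fun x => Real.exp (-b * x) / b := by
      funext z; simp [neg_div]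
    rw [h3]
    exact h2.congr_deriv (by rw [mul_neg, neg_div, neg_neg, mul_div_assoc, div_self hb.ne', mul_one])
  have hcont : Continuous fun y : ℝ => Real.exp (-b * y) :=
    Real.continuous_exp.comp (continuous_const.mul continuous_id)
  have key : ∀ T : ℝ, ∫ y in x..T, Real.exp (-b * y)
      = -Real.exp (-b * T) / b - -Real.exp (-b * x) / b := fun T =>
    intervalIntegral.integral_eq_sub_of_hasDerivAt (fun y _ => hD y)
      (hcont.intervalIntegrable x T)
  have hInt := exp_neg_integrableOn_Ioi x hb
  have h1 := intervalIntegral_tendsto_integral_Ioi x hInt Filter.tendsto_id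
  have h3 : Filter.Tendsto (fun T : ℝ => Real.exp (-b * T)) Filter.atTop (nhds 0) := by
    have h := Real.tendsto_exp_neg_atTop_nhds_zero.comp
      (Filter.Tendsto.const_mul_atTop hb Filter.tendsto_id)
    exact h.congr fun T => by simp [Function.comp, neg_mul]
  have h2 : Filter.Tendsto (fun T : ℝ => ∫ y in x..T, Real.exp (-b * y)) Filter.atTop
      (nhds (Real.exp (-b * x) / b)) := by
    simp_rw [key]
    have := ((h3.div_const b).neg.sub
      (tendsto_const_nhds (x := -Real.exp (-b * x) / b) (f := Filter.atTop)))
    simpa [neg_div] using this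
  exact tendsto_nhds_unique h1 h2

/-- Exponential decay of the remainder
`ũ⁺(x) = (1/(2K)) ∫ₓ^∞ (e^{K(x-y)} - e^{-K(x-y)}) f(y) dy` for `x > 0`. -/
theorem stmt4 (ϑ : ℝ) (K : ℂ) (hK : K ≠ 0) (hKre : 0 ≤ K.re) (hϑ : 2 * |K.re| < ϑ)
    (f : ℝ → ℂ) (hf_meas : AEStronglyMeasurable f volume)
    (hf : Integrable (fun t : ℝ => ‖f t‖ ^ 2 * Real.exp (ϑ * |t|)) volume) :
    ∃ C > (0:ℝ), ∃ ϑ' : ℝ, 0 < ϑ' ∧ ϑ' < ϑ ∧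
      ∀ x : ℝ, 0 < x →
        ‖(1 / (2 * K)) * ∫ y in Set.Ioi x,
            (Complex.exp (K * (x - y)) - Complex.exp (-K * (x - y))) * f y‖
          ≤ C * Real.exp (-ϑ' * x) *
              Real.sqrt (∫ t : ℝ, ‖f t‖ ^ 2 * Real.exp (ϑ * |t|)) := by
  set a := K.re with ha
  have habs : |K.re| = a := abs_of_nonneg hKre
  have h2a : 2 * a < ϑ := by rwa [habs] at hϑ
  have hϑpos : 0 < ϑ := lt_of_le_of_lt (by positivity) hϑ
  have hd : 0 < ϑ - 2 * a := by linarith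
  have hKabs : 0 < ‖K‖ := norm_pos_iff.mpr hK
  refine ⟨1 / (‖K‖ * Real.sqrt (ϑ - 2 * a)), by positivity, ϑ / 2,
    by linarith, by linarith, ?_⟩
  intro x hx
  set M := Real.sqrt (∫ t : ℝ, ‖f t‖ ^ 2 * Real.exp (ϑ * |t|)) with hM
  have hM0 : 0 ≤ M := Real.sqrt_nonneg _
  set F : ℝ → ℝ := fun y => Real.exp (a * (y - x) - ϑ / 2 * y) with hF
  set G : ℝ → ℝ := fun y => ‖f y‖ * Real.exp (ϑ / 2 * y) with hG
  have hF0 : ∀ y, 0 ≤ F y := fun y => (Real.exp_pos _).le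
  have hG0 : ∀ y, 0 ≤ G y := fun y => mul_nonneg (norm_nonneg _) (Real.exp_pos _).le
  have hFcont : Continuous F :=
    Real.continuous_exp.comp (by continuity)
  have hGmeas : AEStronglyMeasurable G (volume.restrict (Set.Ioi x)) :=
    (hf_meas.norm.mul (Real.continuous_exp.comp
      (continuous_const.mul continuous_id)).aestronglyMeasurable).restrict
  -- integrability of F^2
  have hF2eq : ∀ y : ℝ, F y ^ 2 = Real.exp (-(2 * a) * x) * Real.exp (-(ϑ - 2 * a) * y) := by
    intro y
    rw [hF, pow_two, ← Real.exp_add, ← Real.exp_add]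
    congr 1; ring
  have hF2 : IntegrableOn (fun y => F y ^ 2) (Set.Ioi x) volume := by
    have base : IntegrableOn (fun y => Real.exp (-(ϑ - 2 * a) * y)) (Set.Ioi x) volume :=
      exp_neg_integrableOn_Ioi x hd
    have h := base.const_mul (Real.exp (-(2 * a) * x))
    exact h.congr (Filter.Eventually.of_forall fun y => (hF2eq y).symm)
  -- integrability of G^2
  have hG2eq : ∀ y ∈ Set.Ioi x, ‖f y‖ ^ 2 * Real.exp (ϑ * |y|) = G y ^ 2 := by
    intro y hy
    have hy0 : 0 < y := lt_trans hx hy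
    have hGy : G y ^ 2 = ‖f y‖ ^ 2 * Real.exp (ϑ / 2 * y + ϑ / 2 * y) := by
      rw [hG, Real.exp_add]; ring
    rw [abs_of_pos hy0, hGy]
    congr 2
    ring
  have hG2 : IntegrableOn (fun y => G y ^ 2) (Set.Ioi x) volume := by
    refine (hf.integrableOn (s := Set.Ioi x)).congr ?_
    filter_upwards [ae_restrict_mem measurableSet_Ioi] with y hy
    exact hG2eq y hy
  -- integrability of F * G
  have hFG : IntegrableOn (fun y => F y * G y) (Set.Ioi x) volume := by
    refine Integrable.mono' ((hF2.add hG2).div_const 2)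
      (hFcont.aestronglyMeasurable.restrict.mul hGmeas) ?_
    refine Filter.Eventually.of_forall fun y => ?_
    rw [Real.norm_eq_abs, _root_.abs_of_nonneg (mul_nonneg (hF0 y) (hG0 y))]
    simp only [Pi.add_apply]
    nlinarith [sq_nonneg (F y - G y), hF0 y, hG0 y]
  -- Cauchy–Schwarz
  have hpq : (2 : ℝ).HolderConjugate 2 := by
    rw [Real.holderConjugate_iff]; norm_num
  have h2cast : (2 : ℝ) = ((2 : ℕ) : ℝ) := by norm_num
  have hFmem : MemLp F (ENNReal.ofReal 2) (volume.restrict (Set.Ioi x)) := by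
    rw [show ENNReal.ofReal 2 = 2 by norm_num]
    exact (memLp_two_iff_integrable_sq hFcont.aestronglyMeasurable.restrict).mpr hF2
  have hGmem : MemLp G (ENNReal.ofReal 2) (volume.restrict (Set.Ioi x)) := by
    rw [show ENNReal.ofReal 2 = 2 by norm_num]
    exact (memLp_two_iff_integrable_sq hGmeas).mpr hG2
  have hCS := integral_mul_le_Lp_mul_Lq_of_nonneg hpq
    (Filter.Eventually.of_forall hF0) (Filter.Eventually.of_forall hG0) hFmem hGmem
  have e1 : ∀ h : ℝ → ℝ, (∫ y in Set.Ioi x, h y ^ (2:ℝ)) = ∫ y in Set.Ioi x, h y ^ 2 :=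
    fun h => integral_congr_ae (Filter.Eventually.of_forall fun y => by
      simp only [Real.rpow_two])
  rw [e1 F, e1 G, ← Real.sqrt_eq_rpow, ← Real.sqrt_eq_rpow] at hCS
  -- value of ∫ F^2
  have hFval : ∫ y in Set.Ioi x, F y ^ 2 = Real.exp (-ϑ * x) / (ϑ - 2 * a) := by
    calc ∫ y in Set.Ioi x, F y ^ 2
        = ∫ y in Set.Ioi x, Real.exp (-(2 * a) * x) * Real.exp (-(ϑ - 2 * a) * y) := by
          exact integral_congr_ae (Filter.Eventually.of_forall fun y => hF2eq y)
      _ = Real.exp (-(2 * a) * x) * ∫ y in Set.Ioi x, Real.exp (-(ϑ - 2 * a) * y) :=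
          integral_const_mul _ _
      _ = Real.exp (-(2 * a) * x) * (Real.exp (-(ϑ - 2 * a) * x) / (ϑ - 2 * a)) := by
          rw [aux_exp_integral _ _ hd]
      _ = Real.exp (-ϑ * x) / (ϑ - 2 * a) := by
          rw [mul_div_assoc', ← Real.exp_add]; congr 2; ring
  -- bound on ∫ G^2
  have hGle : ∫ y in Set.Ioi x, G y ^ 2 ≤ ∫ t : ℝ, ‖f t‖ ^ 2 * Real.exp (ϑ * |t|) := by
    have h1 : ∫ y in Set.Ioi x, G y ^ 2
        = ∫ y in Set.Ioi x, ‖f y‖ ^ 2 * Real.exp (ϑ * |y|) := by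
      refine integral_congr_ae ?_
      filter_upwards [ae_restrict_mem measurableSet_Ioi] with y hy
      exact (hG2eq y hy).symm
    rw [h1]
    exact setIntegral_le_integral hf (Filter.Eventually.of_forall fun t => by positivity)
  -- pointwise bound on the integrand
  have hpt : ∀ y ∈ Set.Ioi x,
      ‖(Complex.exp (K * ((x : ℂ) - y)) - Complex.exp (-K * ((x : ℂ) - y))) * f y‖
        ≤ 2 * (F y * G y) := by
    intro y hy
    have hxy : x ≤ y := le_of_lt hy
    have e1 : ‖Complex.exp (K * ((x : ℂ) - y))‖ = Real.exp (a * (x - y)) := by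
      rw [Complex.norm_exp]
      congr 1
      simp [Complex.mul_re, ha]
    have e2 : ‖Complex.exp (-K * ((x : ℂ) - y))‖ = Real.exp (a * (y - x)) := by
      rw [Complex.norm_exp]
      congr 1
      simp [Complex.mul_re, ha]; ring
    have hFGy : F y * G y = Real.exp (a * (y - x)) * ‖f y‖ := by
      rw [hF, hG]
      calc Real.exp (a * (y - x) - ϑ / 2 * y) * (‖f y‖ * Real.exp (ϑ / 2 * y))
          = Real.exp (a * (y - x) - ϑ / 2 * y) * Real.exp (ϑ / 2 * y) * ‖f y‖ := by ring
        _ = Real.exp (a * (y - x)) * ‖f y‖ := by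
            rw [← Real.exp_add]; congr 2; ring
    have hle : Real.exp (a * (x - y)) ≤ Real.exp (a * (y - x)) := by
      apply Real.exp_le_exp.mpr
      nlinarith
    calc ‖(Complex.exp (K * ((x : ℂ) - y)) - Complex.exp (-K * ((x : ℂ) - y))) * f y‖
        = ‖Complex.exp (K * ((x : ℂ) - y)) - Complex.exp (-K * ((x : ℂ) - y))‖ * ‖f y‖ :=
          norm_mul _ _
      _ ≤ (‖Complex.exp (K * ((x : ℂ) - y))‖ + ‖Complex.exp (-K * ((x : ℂ) - y))‖) * ‖f y‖ := by
          gcongr; exact norm_sub_le _ _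
      _ ≤ (Real.exp (a * (y - x)) + Real.exp (a * (y - x))) * ‖f y‖ := by
          rw [e1, e2]; gcongr
      _ = 2 * (F y * G y) := by rw [hFGy]; ring
  -- norm of the integral
  have hnorm : ‖∫ y in Set.Ioi x,
      (Complex.exp (K * ((x : ℂ) - y)) - Complex.exp (-K * ((x : ℂ) - y))) * f y‖
        ≤ 2 * ∫ y in Set.Ioi x, F y * G y := by
    calc ‖∫ y in Set.Ioi x,
        (Complex.exp (K * ((x : ℂ) - y)) - Complex.exp (-K * ((x : ℂ) - y))) * f y‖
        ≤ ∫ y in Set.Ioi x,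
          ‖(Complex.exp (K * ((x : ℂ) - y)) - Complex.exp (-K * ((x : ℂ) - y))) * f y‖ :=
          norm_integral_le_integral_norm _
      _ ≤ ∫ y in Set.Ioi x, 2 * (F y * G y) := by
          refine integral_mono_of_nonneg (Filter.Eventually.of_forall fun y => norm_nonneg _)
            (hFG.const_mul 2) ?_
          filter_upwards [ae_restrict_mem measurableSet_Ioi] with y hy
          exact hpt y hy
      _ = 2 * ∫ y in Set.Ioi x, F y * G y := integral_const_mul _ _
  -- assemble
  have hnorm1 : ‖(1 / (2 * K) : ℂ)‖ = 1 / (2 * ‖K‖) := by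
    rw [norm_div, norm_mul]
    simp
  have hsqrtF : Real.sqrt (∫ y in Set.Ioi x, F y ^ 2)
      = Real.exp (-ϑ * x / 2) / Real.sqrt (ϑ - 2 * a) := by
    rw [hFval, Real.sqrt_div (Real.exp_pos _).le, ← Real.exp_half]
  have hsqrtG : Real.sqrt (∫ y in Set.Ioi x, G y ^ 2) ≤ M := Real.sqrt_le_sqrt hGle
  have hsqrtG0 : 0 ≤ Real.sqrt (∫ y in Set.Ioi x, G y ^ 2) := Real.sqrt_nonneg _
  calc ‖(1 / (2 * K)) * ∫ y in Set.Ioi x,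
        (Complex.exp (K * ((x : ℂ) - y)) - Complex.exp (-K * ((x : ℂ) - y))) * f y‖
      = 1 / (2 * ‖K‖) * ‖∫ y in Set.Ioi x,
        (Complex.exp (K * ((x : ℂ) - y)) - Complex.exp (-K * ((x : ℂ) - y))) * f y‖ := by
        rw [norm_mul, hnorm1]
    _ ≤ 1 / (2 * ‖K‖) * (2 * ∫ y in Set.Ioi x, F y * G y) := by
        gcongr
    _ ≤ 1 / (2 * ‖K‖) *
        (2 * (Real.sqrt (∫ y in Set.Ioi x, F y ^ 2) * Real.sqrt (∫ y in Set.Ioi x, G y ^ 2))) := by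
        gcongr
    _ ≤ 1 / (2 * ‖K‖) *
        (2 * (Real.exp (-ϑ * x / 2) / Real.sqrt (ϑ - 2 * a) * M)) := by
        rw [hsqrtF]; gcongr
    _ = 1 / (‖K‖ * Real.sqrt (ϑ - 2 * a)) * Real.exp (-(ϑ / 2) * x) * M := by
        rw [show -(ϑ / 2) * x = -ϑ * x / 2 by ring]
        field_simp
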